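/- Donnelly's distribution sums to one: for every real θ > 0 and every integer n ≥ 1, Σ_{j=0}^n (θ/(n+θ))·C(n,j)/C(n+θ−1,j) = 1, where C(n,j) is the usual binomial coefficient and C(n+θ−1,j) denotes the generalized binomial coefficient ∏_{i=0}^{j−1}(n+θ−1−i)/j! (with the j = 0 term equal to θ/(n+θ)). In particular the j = 0 term shows that the probability that the oldest allele in the population is unobserved in the sample is θ/(n+θ), complementing the probability n/(n+θ) that it is observed. -/

import Mathlib

open Finset

theorem donnelly_distribution_sums_to_one (θ : ℝ) (hθ : 0 < θ) (n : ℕ) (hn : 1 ≤ n) :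
    ∑ j ∈ Finset.range (n + 1),
        (θ / (n + θ)) * (Nat.choose n j : ℝ) * (Nat.factorial j : ℝ) /
          (∏ i ∈ Finset.range j, ((n : ℝ) + θ - 1 - i)) = 1 := by
  set P : ℕ → ℝ := fun j => ∏ i ∈ Finset.range j, ((n : ℝ) + θ - 1 - i) with hPdef
  set N : ℕ → ℝ := fun j => ∏ i ∈ Finset.range j, ((n : ℝ) - i) with hNdef
  have hnθ : 0 < (n : ℝ) + θ := by positivity
  have hPpos : ∀ j, j ≤ n → 0 < P j := by
    intro j hj
    apply Finset.prod_pos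
    intro i hi
    simp only [Finset.mem_range] at hi
    have hi' : i + 1 ≤ n := le_trans hi hj
    have : (i : ℝ) + 1 ≤ (n : ℝ) := by exact_mod_cast hi'
    linarith
  have hN : ∀ j, j ≤ n → (n.choose j : ℝ) * (Nat.factorial j : ℝ) = N j := by
    intro j
    induction j with
    | zero => intro _; simp [hNdef]
    | succ k ih =>
      intro hk
      have hk' : k ≤ n := Nat.le_of_succ_le hk
      have key : n.choose (k + 1) * (k + 1) = n.choose k * (n - k) :=
        Nat.choose_succ_right_eq n k
      have hcast : ((n - k : ℕ) : ℝ) = (n : ℝ) - k := Nat.cast_sub hk'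
      have key' : (n.choose (k + 1) : ℝ) * ((k : ℝ) + 1) =
          (n.choose k : ℝ) * ((n : ℝ) - k) := by
        rw [← hcast]
        exact_mod_cast key
      have hfac : (Nat.factorial (k + 1) : ℝ) = ((k : ℝ) + 1) * (Nat.factorial k : ℝ) := by
        rw [Nat.factorial_succ]; push_cast; ring
      have hNk : N (k + 1) = N k * ((n : ℝ) - k) := by
        simp [hNdef, Finset.prod_range_succ]
      calc (n.choose (k + 1) : ℝ) * (Nat.factorial (k + 1) : ℝ)
          = ((n.choose (k + 1) : ℝ) * ((k : ℝ) + 1)) * (Nat.factorial k : ℝ) := by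
            rw [hfac]; ring
        _ = ((n.choose k : ℝ) * ((n : ℝ) - k)) * (Nat.factorial k : ℝ) := by rw [key']
        _ = ((n.choose k : ℝ) * (Nat.factorial k : ℝ)) * ((n : ℝ) - k) := by ring
        _ = N k * ((n : ℝ) - k) := by rw [ih hk']
        _ = N (k + 1) := hNk.symm
  set g : ℕ → ℝ := fun j => N j * ((n : ℝ) + θ - j) / (((n : ℝ) + θ) * P j) with hgdef
  have hterm : ∀ j ∈ Finset.range (n + 1),
      (θ / (n + θ)) * (Nat.choose n j : ℝ) * (Nat.factorial j : ℝ) / P j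
        = g j - g (j + 1) := by
    intro j hj
    simp only [Finset.mem_range] at hj
    have hjn : j ≤ n := Nat.lt_succ_iff.mp hj
    have hPj : P j ≠ 0 := ne_of_gt (hPpos j hjn)
    have hNj : (n.choose j : ℝ) * (Nat.factorial j : ℝ) = N j := hN j hjn
    have hNs : N (j + 1) = N j * ((n : ℝ) - j) := by
      simp [hNdef, Finset.prod_range_succ]
    have hPs : P (j + 1) = P j * ((n : ℝ) + θ - 1 - j) := by
      simp [hPdef, Finset.prod_range_succ]
    rcases eq_or_lt_of_le hjn with hje | hjl
    · -- j = n
      have hzero : N (j + 1) = 0 := by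
        rw [hNs, hje]; simp
      have : g (j + 1) = 0 := by simp [hgdef, hzero]
      rw [this, sub_zero, hgdef]
      simp only
      rw [← hNj]
      have hjr : (j : ℝ) = (n : ℝ) := by exact_mod_cast hje
      rw [hjr]
      field_simp
      ring
    · -- j < n
      have hfac : (n : ℝ) + θ - 1 - j ≠ 0 := by
        have : (j : ℝ) + 1 ≤ (n : ℝ) := by exact_mod_cast hjl
        have : 0 < (n : ℝ) + θ - 1 - j := by linarith
        linarith
      rw [hgdef]
      simp only
      rw [hNs, hPs, ← hNj]
      field_simp
      push_cast
      ring
  rw [Finset.sum_congr rfl hterm, Finset.sum_range_sub' g]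
  have hg0 : g 0 = 1 := by
    simp [hgdef, hNdef, hPdef]
    exact hnθ.ne'
  have hgn : g (n + 1) = 0 := by
    have : N (n + 1) = 0 := by
      simp [hNdef, Finset.prod_range_succ]
    simp [hgdef, this]
  rw [hg0, hgn, sub_zero]
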